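/- Soft dynamic programming optimality and closed-form optimal policy: Define Q* and V* by the backward recursion V*_{H+1} ≡ 0, Q*_h(s,a) := R_h(s,a) + E_{s'∼P_h(s,a)}[V*_{h+1}(s')], and V*_h(s) := log Σ_{a∈A} exp(Q*_h(s,a)) for h = H, …, 1. Then for every policy π, J_β(π) ≤ β · E_{s_1∼ρ}[V*_1(s_1)], and equality holds for the softmax policy π_{Q*} given by π_{Q*,h}(a|s) := exp(Q*_h(s,a) − V*_h(s)); in particular π_{Q*} maximizes J_β over all policies. -/

import Mathlib

open Finset

namespace TBRM

/-- `p` is a probability mass function on a finite type. -/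
def IsPMF {X : Type*} [Fintype X] (p : X → ℝ) : Prop :=
  (∀ x, 0 ≤ p x) ∧ ∑ x, p x = 1

/-- χ²-divergence between pmfs on a finite type. -/
noncomputable def chiSq {X : Type*} [Fintype X] (p q : X → ℝ) : ℝ :=
  (∑ x, p x ^ 2 / q x) - 1

variable {H : ℕ} {S : Fin (H + 1) → Type*} {A : Type*}
variable [∀ i, Fintype (S i)] [∀ i, DecidableEq (S i)] [Fintype A] [DecidableEq A]

/-- Density of a full trajectory (including the extra final state `s_{H+1}`),
under initial distribution `ρ`, transition kernels `P`, and policy `π`. -/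
noncomputable def trajDensity (ρ : S 0 → ℝ)
    (P : ∀ h : Fin H, S h.castSucc → A → S h.succ → ℝ)
    (π : ∀ h : Fin H, S h.castSucc → A → ℝ)
    (s : ∀ i : Fin (H + 1), S i) (a : Fin H → A) : ℝ :=
  ρ (s 0) * ∏ h : Fin H, (π h (s h.castSucc) (a h) * P h (s h.castSucc) (a h) (s h.succ))

/-- Expectation of a trajectory functional under policy `π`. -/
noncomputable def expTraj (ρ : S 0 → ℝ)
    (P : ∀ h : Fin H, S h.castSucc → A → S h.succ → ℝ)
    (π : ∀ h : Fin H, S h.castSucc → A → ℝ)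
    (f : (∀ i : Fin (H + 1), S i) → (Fin H → A) → ℝ) : ℝ :=
  ∑ s : ∀ i : Fin (H + 1), S i, ∑ a : Fin H → A, trajDensity ρ P π s a * f s a

/-- Step-`h` occupancy measure `d_h^π(x,b)`. -/
noncomputable def occ (ρ : S 0 → ℝ)
    (P : ∀ h : Fin H, S h.castSucc → A → S h.succ → ℝ)
    (π : ∀ h : Fin H, S h.castSucc → A → ℝ)
    (h : Fin H) (x : S h.castSucc) (b : A) : ℝ :=
  expTraj ρ P π (fun s a => if s h.castSucc = x ∧ a h = b then 1 else 0)


/-- KL-regularized return `J_β(π)` relative to a reference policy `πref`. -/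
noncomputable def KLret (ρ : S 0 → ℝ)
    (P : ∀ h : Fin H, S h.castSucc → A → S h.succ → ℝ)
    (πref : ∀ h : Fin H, S h.castSucc → A → ℝ)
    (r : ∀ h : Fin H, S h.castSucc → A → ℝ) (β : ℝ)
    (π : ∀ h : Fin H, S h.castSucc → A → ℝ) : ℝ :=
  expTraj ρ P π (fun s a => ∑ h : Fin H,
    (r h (s h.castSucc) (a h)
      - β * Real.log (π h (s h.castSucc) (a h) / πref h (s h.castSucc) (a h))))

/-- The optimal soft value function `V*`, defined by the backward recursion
`V*_{H+1} ≡ 0` and `V*_h(s) = log Σ_a exp(R_h(s,a) + E_{s'∼P_h(s,a)}[V*_{h+1}(s')])`,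
where `R_h(s,a) := r_h(s,a)/β + log πref_h(a|s)`. -/
noncomputable def Vstar
    (P : ∀ h : Fin H, S h.castSucc → A → S h.succ → ℝ)
    (πref : ∀ h : Fin H, S h.castSucc → A → ℝ)
    (r : ∀ h : Fin H, S h.castSucc → A → ℝ) (β : ℝ) :
    ∀ i : Fin (H + 1), S i → ℝ :=
  Fin.reverseInduction (fun _ => 0)
    (fun h rec s => Real.log (∑ a : A, Real.exp
      (r h s a / β + Real.log (πref h s a) + ∑ s' : S h.succ, P h s a s' * rec s')))

/-- The optimal soft Q-function
`Q*_h(s,a) := R_h(s,a) + E_{s'∼P_h(s,a)}[V*_{h+1}(s')]`. -/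
noncomputable def Qstar
    (P : ∀ h : Fin H, S h.castSucc → A → S h.succ → ℝ)
    (πref : ∀ h : Fin H, S h.castSucc → A → ℝ)
    (r : ∀ h : Fin H, S h.castSucc → A → ℝ) (β : ℝ)
    (h : Fin H) (s : S h.castSucc) (a : A) : ℝ :=
  r h s a / β + Real.log (πref h s a)
    + ∑ s' : S h.succ, P h s a s' * Vstar P πref r β h.succ s'

/-- Backward value recursion for a given policy and per-step payoff. -/
noncomputable def Jt
    (P : ∀ h : Fin H, S h.castSucc → A → S h.succ → ℝ)
    (π : ∀ h : Fin H, S h.castSucc → A → ℝ)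
    (f : ∀ h : Fin H, S h.castSucc → A → ℝ) :
    ∀ i : Fin (H + 1), S i → ℝ :=
  Fin.reverseInduction (fun _ => 0)
    (fun h rec s => ∑ a : A, π h s a * (f h s a + ∑ s' : S h.succ, P h s a s' * rec s'))

omit [∀ i, DecidableEq (S i)] [DecidableEq A] in
lemma Jt_last (P : ∀ h : Fin H, S h.castSucc → A → S h.succ → ℝ)
    (π f : ∀ h : Fin H, S h.castSucc → A → ℝ) (s : S (Fin.last H)) :
    Jt P π f (Fin.last H) s = 0 := by
  simp [Jt]

omit [∀ i, DecidableEq (S i)] [DecidableEq A] in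
lemma Jt_castSucc (P : ∀ h : Fin H, S h.castSucc → A → S h.succ → ℝ)
    (π f : ∀ h : Fin H, S h.castSucc → A → ℝ) (h : Fin H) (s : S h.castSucc) :
    Jt P π f h.castSucc s =
      ∑ a : A, π h s a * (f h s a + ∑ s' : S h.succ, P h s a s' * Jt P π f h.succ s') := by
  simp [Jt]

lemma Jt_succ_shift {H : ℕ} {S : Fin (H + 2) → Type*} {A : Type*}
    [∀ i, Fintype (S i)] [Fintype A]
    (P : ∀ h : Fin (H + 1), S h.castSucc → A → S h.succ → ℝ)
    (π f : ∀ h : Fin (H + 1), S h.castSucc → A → ℝ) :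
    ∀ (j : Fin (H + 1)) (s : S j.succ),
      Jt (S := fun i : Fin (H + 1) => S i.succ) (fun h => P h.succ)
        (fun h => π h.succ) (fun h => f h.succ) j s = Jt P π f j.succ s := by
  intro j
  induction j using Fin.reverseInduction with
  | last => intro s; rw [Jt_last]; exact (Jt_last P π f s).symm
  | cast j ih =>
    intro s
    rw [Jt_castSucc]
    refine Eq.trans ?_ (Jt_castSucc P π f j.succ s).symm
    simp only [ih]

lemma expTraj_cons {H : ℕ} {S : Fin (H + 2) → Type*} {A : Type*}
    [∀ i, Fintype (S i)] [Fintype A]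
    (ρ : S 0 → ℝ)
    (P : ∀ h : Fin (H + 1), S h.castSucc → A → S h.succ → ℝ)
    (π : ∀ h : Fin (H + 1), S h.castSucc → A → ℝ)
    (F : (∀ i : Fin (H + 2), S i) → (Fin (H + 1) → A) → ℝ) :
    expTraj ρ P π F =
      ∑ s0 : S 0, ∑ a0 : A, ρ s0 * π 0 s0 a0 *
        expTraj (S := fun i : Fin (H + 1) => S i.succ) (fun x => P 0 s0 a0 x)
          (fun h => P h.succ) (fun h => π h.succ)
          (fun s' a' => F (Fin.cons s0 s') (Fin.cons a0 a')) := by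
  simp only [expTraj, trajDensity]
  rw [← Equiv.sum_comp (Fin.consEquiv S), Fintype.sum_prod_type]
  simp only [← Equiv.sum_comp (Fin.consEquiv fun _ : Fin (H + 1) => A), Fintype.sum_prod_type]
  simp only [Fin.consEquiv_apply, Fin.cons_zero, Fin.prod_univ_succ, Fin.cons_succ,
    Fin.castSucc_zero, ← Fin.succ_castSucc, Fin.consEquiv, Equiv.coe_fn_mk]
  refine Finset.sum_congr rfl fun s0 _ => ?_
  rw [Finset.sum_comm]
  refine Finset.sum_congr rfl fun a0 _ => ?_
  rw [Finset.mul_sum]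
  refine Finset.sum_congr rfl fun s' _ => ?_
  rw [Finset.mul_sum]
  refine Finset.sum_congr rfl fun a' _ => ?_
  ring

lemma key {A : Type*} [Fintype A] (H : ℕ) :
    ∀ (S : Fin (H + 1) → Type u) [∀ i, Fintype (S i)]
      (ρ : S 0 → ℝ) (P : ∀ h : Fin H, S h.castSucc → A → S h.succ → ℝ)
      (π f : ∀ h : Fin H, S h.castSucc → A → ℝ) (c : ℝ),
      (∀ h s a, ∑ s', P h s a s' = 1) → (∀ h s, ∑ a, π h s a = 1) →
      expTraj ρ P π (fun s a => c + ∑ h, f h (s h.castSucc) (a h)) =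
        ∑ s1, ρ s1 * (c + Jt P π f 0 s1) := by
  induction H with
  | zero =>
    intro S _ ρ P π f c hP hπ
    have hJ : ∀ (i : Fin 1) (s : S i), Jt P π f i s = 0 := by
      intro i s
      have hi : i = Fin.last 0 := Subsingleton.elim _ _
      subst hi
      exact Jt_last P π f s
    simp only [expTraj, trajDensity, Fin.sum_univ_zero, Fin.prod_univ_zero, mul_one, add_zero,
      Fintype.sum_unique, hJ]
    rw [← Equiv.sum_comp (Fin.consEquiv S), Fintype.sum_prod_type]
    simp [Fin.consEquiv, Fintype.sum_unique]
  | succ H IH =>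
    intro S _ ρ P π f c hP hπ
    rw [expTraj_cons]
    have hsub : ∀ (s0 : S 0) (a0 : A),
        expTraj (S := fun i : Fin (H + 1) => S i.succ) (fun x => P 0 s0 a0 x)
            (fun h => P h.succ) (fun h => π h.succ)
            (fun s' a' => c + ∑ h : Fin (H + 1),
              f h ((Fin.cons s0 s') h.castSucc) (Fin.cons (α := fun _ => A) a0 a' h))
          = ∑ x, P 0 s0 a0 x * ((c + f 0 s0 a0) + Jt P π f (Fin.succ 0) x) := by
      intro s0 a0
      have e1 : (fun (s' : ∀ i : Fin (H + 1), S i.succ) (a' : Fin H → A) =>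
            c + ∑ h : Fin (H + 1), f h ((Fin.cons s0 s') h.castSucc) (Fin.cons (α := fun _ => A) a0 a' h))
          = (fun s' a' => (c + f 0 s0 a0) +
              ∑ h : Fin H, (fun h : Fin H => f h.succ) h (s' h.castSucc) (a' h)) := by
        funext s' a'
        simp only [Fin.sum_univ_succ, Fin.castSucc_zero, Fin.cons_zero, Fin.cons_succ,
          ← Fin.succ_castSucc, add_assoc]
      rw [e1, IH (fun i => S i.succ) (fun x => P 0 s0 a0 x) (fun h => P h.succ)
        (fun h => π h.succ) (fun h => f h.succ) (c + f 0 s0 a0)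
        (fun h s a => hP h.succ s a) (fun h s => hπ h.succ s)]
      refine Finset.sum_congr rfl fun x _ => ?_
      rw [Jt_succ_shift]
    simp only [hsub]
    have hJ0 : ∀ s1 : S 0, Jt P π f 0 s1 = ∑ a : A, π 0 s1 a *
        (f 0 s1 a + ∑ x : S (Fin.succ (0 : Fin (H + 1))),
          P 0 s1 a x * Jt P π f (Fin.succ 0) x) :=
      fun s1 => Jt_castSucc P π f 0 s1
    refine Finset.sum_congr rfl fun s1 _ => ?_
    rw [hJ0 s1]
    have hx : ∀ a0 : A, (∑ x, P 0 s1 a0 x * ((c + f 0 s1 a0) + Jt P π f (Fin.succ 0) x))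
        = c + (f 0 s1 a0 + ∑ x, P 0 s1 a0 x * Jt P π f (Fin.succ 0) x) := by
      intro a0
      simp only [mul_add, Finset.sum_add_distrib, ← Finset.sum_mul, hP 0 s1 a0, one_mul, add_assoc]
    simp only [hx, mul_assoc, ← Finset.mul_sum]
    congr 1
    simp only [mul_add, Finset.sum_add_distrib, ← Finset.sum_mul, hπ 0 s1, one_mul]

omit [∀ i, DecidableEq (S i)] [DecidableEq A] in
lemma Vstar_last (P : ∀ h : Fin H, S h.castSucc → A → S h.succ → ℝ)
    (πref r : ∀ h : Fin H, S h.castSucc → A → ℝ) (β : ℝ) (s : S (Fin.last H)) :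
    Vstar P πref r β (Fin.last H) s = 0 := by
  simp [Vstar]

omit [∀ i, DecidableEq (S i)] [DecidableEq A] in
lemma Vstar_castSucc (P : ∀ h : Fin H, S h.castSucc → A → S h.succ → ℝ)
    (πref r : ∀ h : Fin H, S h.castSucc → A → ℝ) (β : ℝ) (h : Fin H) (s : S h.castSucc) :
    Vstar P πref r β h.castSucc s =
      Real.log (∑ a : A, Real.exp (Qstar P πref r β h s a)) := by
  simp [Vstar, Qstar]

lemma sum_exp_pos {A : Type*} [Fintype A] [Nonempty A] (Q : A → ℝ) :
    0 < ∑ a, Real.exp (Q a) :=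
  Finset.sum_pos (fun a _ => Real.exp_pos _) Finset.univ_nonempty

lemma softmax_sum {A : Type*} [Fintype A] [Nonempty A] (Q : A → ℝ) :
    ∑ a, Real.exp (Q a - Real.log (∑ b, Real.exp (Q b))) = 1 := by
  have h := sum_exp_pos Q
  simp only [Real.exp_sub, Real.exp_log h, ← Finset.sum_div]
  exact div_self h.ne'

lemma gibbs_le {A : Type*} [Fintype A] [Nonempty A] (p Q : A → ℝ) (hp : IsPMF p) :
    ∑ a, p a * (Q a - Real.log (p a)) ≤ Real.log (∑ a, Real.exp (Q a)) := by
  set V := Real.log (∑ a, Real.exp (Q a)) with hV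
  have hs : ∑ a, Real.exp (Q a - V) = 1 := by rw [hV]; exact softmax_sum Q
  have key : ∀ a : A, p a * (Q a - Real.log (p a)) ≤ Real.exp (Q a - V) - p a + p a * V := by
    intro a
    rcases eq_or_lt_of_le (hp.1 a) with h0 | h0
    · rw [← h0]; simp; positivity
    · have h1 := Real.add_one_le_exp (Q a - Real.log (p a) - V)
      have h2 : p a * Real.exp (Q a - Real.log (p a) - V) = Real.exp (Q a - V) := by
        rw [sub_right_comm, Real.exp_sub, Real.exp_log h0]
        field_simp
      nlinarith [mul_le_mul_of_nonneg_left h1 h0.le]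
  calc ∑ a, p a * (Q a - Real.log (p a))
      ≤ ∑ a, (Real.exp (Q a - V) - p a + p a * V) := Finset.sum_le_sum fun a _ => key a
    _ = (∑ a, Real.exp (Q a - V)) - (∑ a, p a) + (∑ a, p a) * V := by
        rw [Finset.sum_add_distrib, Finset.sum_sub_distrib, Finset.sum_mul]
    _ = V := by rw [hs, hp.2]; ring

lemma Jt_le_Vstar [Nonempty A]
    (P : ∀ h : Fin H, S h.castSucc → A → S h.succ → ℝ) (hP : ∀ h s a, IsPMF (P h s a))
    (πref : ∀ h : Fin H, S h.castSucc → A → ℝ) (hπrefpos : ∀ h s a, 0 < πref h s a)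
    (r : ∀ h : Fin H, S h.castSucc → A → ℝ) (β : ℝ) (hβ : 0 < β)
    (π : ∀ h : Fin H, S h.castSucc → A → ℝ) (hπ : ∀ h s, IsPMF (π h s)) :
    ∀ (i : Fin (H + 1)) (s : S i),
      Jt P π (fun h s a => r h s a - β * Real.log (π h s a / πref h s a)) i s
        ≤ β * Vstar P πref r β i s := by
  intro i
  induction i using Fin.reverseInduction with
  | last => intro s; rw [Jt_last, Vstar_last]; norm_num
  | cast h ih =>
    intro s
    rw [Jt_castSucc, Vstar_castSucc]
    have hstep : ∀ a : A,
        π h s a * ((r h s a - β * Real.log (π h s a / πref h s a)) +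
            ∑ s', P h s a s' *
              Jt P π (fun h s a => r h s a - β * Real.log (π h s a / πref h s a)) h.succ s')
          ≤ β * (π h s a * (Qstar P πref r β h s a - Real.log (π h s a))) := by
      intro a
      rcases eq_or_lt_of_le ((hπ h s).1 a) with h0 | h0
      · rw [← h0]; simp
      · have hJ : ∑ s', P h s a s' *
              Jt P π (fun h s a => r h s a - β * Real.log (π h s a / πref h s a)) h.succ s'
            ≤ ∑ s', P h s a s' * (β * Vstar P πref r β h.succ s') :=
          Finset.sum_le_sum fun s' _ =>
            mul_le_mul_of_nonneg_left (ih s') ((hP h s a).1 s')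
        have hlog : Real.log (π h s a / πref h s a) =
            Real.log (π h s a) - Real.log (πref h s a) :=
          Real.log_div h0.ne' (hπrefpos h s a).ne'
        calc π h s a * ((r h s a - β * Real.log (π h s a / πref h s a)) +
              ∑ s', P h s a s' *
                Jt P π (fun h s a => r h s a - β * Real.log (π h s a / πref h s a)) h.succ s')
            ≤ π h s a * ((r h s a - β * Real.log (π h s a / πref h s a)) +
                ∑ s', P h s a s' * (β * Vstar P πref r β h.succ s')) := by
              apply mul_le_mul_of_nonneg_left _ h0.le
              exact add_le_add_right hJ _
          _ = β * (π h s a * (Qstar P πref r β h s a - Real.log (π h s a))) := by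
              rw [hlog]
              have hPV : ∑ s', P h s a s' * (β * Vstar P πref r β h.succ s')
                  = β * ∑ s', P h s a s' * Vstar P πref r β h.succ s' := by
                rw [Finset.mul_sum]
                exact Finset.sum_congr rfl fun s' _ => by ring
              rw [hPV]
              simp only [Qstar]
              have hr : β * (r h s a / β) = r h s a := by field_simp
              linear_combination (-(π h s a)) * hr
    calc ∑ a, π h s a * ((r h s a - β * Real.log (π h s a / πref h s a)) +
            ∑ s', P h s a s' *
              Jt P π (fun h s a => r h s a - β * Real.log (π h s a / πref h s a)) h.succ s')
        ≤ ∑ a, β * (π h s a * (Qstar P πref r β h s a - Real.log (π h s a))) :=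
          Finset.sum_le_sum fun a _ => hstep a
      _ = β * ∑ a, π h s a * (Qstar P πref r β h s a - Real.log (π h s a)) := by
          rw [Finset.mul_sum]
      _ ≤ β * Real.log (∑ a, Real.exp (Qstar P πref r β h s a)) :=
          mul_le_mul_of_nonneg_left (gibbs_le _ _ (hπ h s)) hβ.le

lemma Jt_eq_Vstar [Nonempty A]
    (P : ∀ h : Fin H, S h.castSucc → A → S h.succ → ℝ) (hP : ∀ h s a, IsPMF (P h s a))
    (πref : ∀ h : Fin H, S h.castSucc → A → ℝ) (hπrefpos : ∀ h s a, 0 < πref h s a)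
    (r : ∀ h : Fin H, S h.castSucc → A → ℝ) (β : ℝ) (hβ : 0 < β) :
    ∀ (i : Fin (H + 1)) (s : S i),
      Jt P (fun h s a => Real.exp (Qstar P πref r β h s a - Vstar P πref r β h.castSucc s))
        (fun h s a => r h s a - β * Real.log
          (Real.exp (Qstar P πref r β h s a - Vstar P πref r β h.castSucc s) / πref h s a))
        i s = β * Vstar P πref r β i s := by
  intro i
  induction i using Fin.reverseInduction with
  | last => intro s; rw [Jt_last, Vstar_last]; norm_num
  | cast h ih =>
    intro s
    rw [Jt_castSucc]
    have hterm : ∀ a : A,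
        Real.exp (Qstar P πref r β h s a - Vstar P πref r β h.castSucc s) *
          ((r h s a - β * Real.log
            (Real.exp (Qstar P πref r β h s a - Vstar P πref r β h.castSucc s) / πref h s a)) +
           ∑ s', P h s a s' *
            Jt P (fun h s a => Real.exp (Qstar P πref r β h s a - Vstar P πref r β h.castSucc s))
              (fun h s a => r h s a - β * Real.log
                (Real.exp (Qstar P πref r β h s a - Vstar P πref r β h.castSucc s) / πref h s a))
              h.succ s')
        = Real.exp (Qstar P πref r β h s a - Vstar P πref r β h.castSucc s) *
            (β * Vstar P πref r β h.castSucc s) := by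
      intro a
      have hJ : ∀ s' : S h.succ,
          Jt P (fun h s a => Real.exp (Qstar P πref r β h s a - Vstar P πref r β h.castSucc s))
            (fun h s a => r h s a - β * Real.log
              (Real.exp (Qstar P πref r β h s a - Vstar P πref r β h.castSucc s) / πref h s a))
            h.succ s' = β * Vstar P πref r β h.succ s' := fun s' => ih s'
      simp only [hJ]
      have hlog : Real.log
          (Real.exp (Qstar P πref r β h s a - Vstar P πref r β h.castSucc s) / πref h s a)
          = (Qstar P πref r β h s a - Vstar P πref r β h.castSucc s)
            - Real.log (πref h s a) := by
        rw [Real.log_div (Real.exp_ne_zero _) (hπrefpos h s a).ne', Real.log_exp]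
      rw [hlog]
      have hPV : ∑ s', P h s a s' * (β * Vstar P πref r β h.succ s')
          = β * ∑ s', P h s a s' * Vstar P πref r β h.succ s' := by
        rw [Finset.mul_sum]
        exact Finset.sum_congr rfl fun s' _ => by ring
      rw [hPV]
      congr 1
      simp only [Qstar]
      field_simp
      ring
    rw [Finset.sum_congr rfl fun a _ => hterm a, ← Finset.sum_mul]
    have hsum : ∑ a : A, Real.exp (Qstar P πref r β h s a - Vstar P πref r β h.castSucc s)
        = 1 := by
      rw [Vstar_castSucc]
      exact softmax_sum _
    rw [hsum, one_mul]

/-- **Soft dynamic programming optimality and closed-form optimal policy.** For every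
policy `π`, `J_β(π) ≤ β · E_{s_1∼ρ}[V*_1(s_1)]`, and equality holds for the softmax policy
`π_{Q*,h}(a|s) := exp(Q*_h(s,a) − V*_h(s))`; in particular `π_{Q*}` maximizes `J_β`. -/
theorem soft_dp_optimality
    (hH : 0 < H) [∀ i, Nonempty (S i)] [Nonempty A]
    (ρ : S 0 → ℝ) (hρ : IsPMF ρ)
    (P : ∀ h : Fin H, S h.castSucc → A → S h.succ → ℝ)
    (hP : ∀ h s a, IsPMF (P h s a))
    (r : ∀ h : Fin H, S h.castSucc → A → ℝ)
    (πref : ∀ h : Fin H, S h.castSucc → A → ℝ)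
    (hπref : ∀ h s, IsPMF (πref h s)) (hπrefpos : ∀ h s a, 0 < πref h s a)
    (β : ℝ) (hβ : 0 < β) :
    (∀ π : ∀ h : Fin H, S h.castSucc → A → ℝ, (∀ h s, IsPMF (π h s)) →
      KLret ρ P πref r β π ≤ β * ∑ s1 : S 0, ρ s1 * Vstar P πref r β 0 s1) ∧
    KLret ρ P πref r β
        (fun h s a => Real.exp (Qstar P πref r β h s a - Vstar P πref r β h.castSucc s)) =
      β * ∑ s1 : S 0, ρ s1 * Vstar P πref r β 0 s1 := by
  constructor
  · intro π hπ
    have hkey := key H S ρ P π (fun h s a => r h s a - β * Real.log (π h s a / πref h s a)) 0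
      (fun h s a => (hP h s a).2) (fun h s => (hπ h s).2)
    simp only [zero_add] at hkey
    have hk2 : KLret ρ P πref r β π = ∑ s1, ρ s1 *
        Jt P π (fun h s a => r h s a - β * Real.log (π h s a / πref h s a)) 0 s1 := by
      unfold KLret
      exact hkey
    rw [hk2, Finset.mul_sum]
    refine Finset.sum_le_sum fun s1 _ => ?_
    calc ρ s1 * Jt P π (fun h s a => r h s a - β * Real.log (π h s a / πref h s a)) 0 s1
        ≤ ρ s1 * (β * Vstar P πref r β 0 s1) :=
          mul_le_mul_of_nonneg_left (Jt_le_Vstar P hP πref hπrefpos r β hβ π hπ 0 s1) (hρ.1 s1)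
      _ = β * (ρ s1 * Vstar P πref r β 0 s1) := by ring
  · have hπQ : ∀ (h : Fin H) (s : S h.castSucc),
        ∑ a : A, Real.exp (Qstar P πref r β h s a - Vstar P πref r β h.castSucc s) = 1 := by
      intro h s
      rw [Vstar_castSucc]
      exact softmax_sum _
    have hkey := key H S ρ P
      (fun h s a => Real.exp (Qstar P πref r β h s a - Vstar P πref r β h.castSucc s))
      (fun h s a => r h s a - β * Real.log
        (Real.exp (Qstar P πref r β h s a - Vstar P πref r β h.castSucc s) / πref h s a)) 0
      (fun h s a => (hP h s a).2) hπQ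
    simp only [zero_add] at hkey
    have hk2 : KLret ρ P πref r β
        (fun h s a => Real.exp (Qstar P πref r β h s a - Vstar P πref r β h.castSucc s))
        = ∑ s1, ρ s1 * Jt P
          (fun h s a => Real.exp (Qstar P πref r β h s a - Vstar P πref r β h.castSucc s))
          (fun h s a => r h s a - β * Real.log
            (Real.exp (Qstar P πref r β h s a - Vstar P πref r β h.castSucc s) / πref h s a))
          0 s1 := by
      unfold KLret
      exact hkey
    rw [hk2, Finset.mul_sum]
    refine Finset.sum_congr rfl fun s1 _ => ?_
    rw [Jt_eq_Vstar P hP πref hπrefpos r β hβ 0 s1]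
    ring

end TBRM
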